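/- arXiv:1910.08641 — 2 statements merged into one kernel-verified Lean document; each statement's English description precedes it below -/
import Mathlib

section
/- With b as in the Merton-style bond pricing formula, for each fixed t ∈ [0,T), the function v ↦ b(t,v)/v is strictly decreasing on (0,∞); indeed ∂/∂v (b(t,v)/v) = -D(1 - N(d₂(t,v)))/v² < 0. -/
open Real MeasureTheory


open Real

/-- Standard normal CDF. -/
noncomputable def stdNormalCDF (x : ℝ) : ℝ :=
  ∫ z in Set.Iic x, (Real.sqrt (2 * Real.pi))⁻¹ * Real.exp (-z ^ 2 / 2)

noncomputable def d₁ (α σ₁ D T t v : ℝ) : ℝ :=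
  (Real.log (D / v) - σ₁ ^ 2 * (1 / 2 + α / σ₁ ^ 2) * (T - t)) / (σ₁ * Real.sqrt (T - t))

noncomputable def d₂ (α σ₁ D T t v : ℝ) : ℝ :=
  d₁ α σ₁ D T t v + σ₁ * Real.sqrt (T - t)

/-- The Merton-style bond price function `b`. -/
noncomputable def bfun (α σ₁ D T t v : ℝ) : ℝ :=
  v * Real.exp (α * (T - t)) * stdNormalCDF (d₁ α σ₁ D T t v)
    + D * (1 - stdNormalCDF (d₂ α σ₁ D T t v))


lemma gaussPDF_integrable :
    Integrable (fun z : ℝ => (Real.sqrt (2 * Real.pi))⁻¹ * Real.exp (-z ^ 2 / 2)) := by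
  have h := (integrable_exp_neg_mul_sq (b := (1/2 : ℝ)) one_half_pos).const_mul
    (Real.sqrt (2 * Real.pi))⁻¹
  convert h using 2 with z
  ring_nf

lemma gaussPDF_continuous :
    Continuous (fun z : ℝ => (Real.sqrt (2 * Real.pi))⁻¹ * Real.exp (-z ^ 2 / 2)) := by
  continuity

lemma hasDerivAt_stdNormalCDF (x : ℝ) :
    HasDerivAt stdNormalCDF ((Real.sqrt (2 * Real.pi))⁻¹ * Real.exp (-x ^ 2 / 2)) x := by
  set f : ℝ → ℝ := fun z => (Real.sqrt (2 * Real.pi))⁻¹ * Real.exp (-z ^ 2 / 2) with hf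
  have heq : stdNormalCDF = fun y => (∫ z in Set.Iic (0:ℝ), f z) + ∫ z in (0:ℝ)..y, f z := by
    funext y
    rw [← intervalIntegral.integral_Iic_sub_Iic (gaussPDF_integrable.integrableOn)
      (gaussPDF_integrable.integrableOn)]
    simp only [stdNormalCDF, hf]
    ring
  rw [heq]
  exact ((intervalIntegral.integral_hasDerivAt_right
    gaussPDF_integrable.intervalIntegrable
    (gaussPDF_continuous.stronglyMeasurableAtFilter _ _)
    (gaussPDF_continuous.continuousAt)).const_add _)

lemma stdNormalCDF_lt_one (x : ℝ) : stdNormalCDF x < 1 := by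
  set f : ℝ → ℝ := fun z => (Real.sqrt (2 * Real.pi))⁻¹ * Real.exp (-z ^ 2 / 2) with hf
  have htot : ∫ z : ℝ, f z = 1 := by
    have h : ∫ z : ℝ, Real.exp (-(1/2) * z ^ 2) = Real.sqrt (π / (1/2)) :=
      integral_gaussian (1/2)
    have h2 : (fun z : ℝ => Real.exp (-(1/2) * z ^ 2)) = fun z => Real.exp (-z ^ 2 / 2) := by
      funext z; ring_nf
    rw [h2] at h
    have hsq : Real.sqrt (π / (1/2)) = Real.sqrt (2 * π) := by norm_num [mul_comm]
    rw [hf]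
    rw [integral_const_mul, h, hsq, inv_mul_cancel₀]
    positivity
  have hsplit : (∫ z in Set.Iic x, f z) + ∫ z in Set.Ioi x, f z = ∫ z : ℝ, f z :=
    intervalIntegral.integral_Iic_add_Ioi gaussPDF_integrable.integrableOn gaussPDF_integrable.integrableOn
  have hpos : 0 < ∫ z in Set.Ioi x, f z := by
    apply setIntegral_pos_iff_support_of_nonneg_ae ?_ gaussPDF_integrable.integrableOn |>.2
    · have : Function.support f = Set.univ := by
        ext z; simp only [Function.mem_support, Set.mem_univ, iff_true, hf]
        positivity
      rw [this]
      simp [Real.volume_Ioi]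
    · filter_upwards with z
      positivity
  have : stdNormalCDF x = (∫ z in Set.Iic x, f z) := rfl
  rw [this, ← htot, ← hsplit]
  linarith

lemma key_identity (α σ₁ D T t v : ℝ) (hσ₁ : 0 < σ₁) (hτ : 0 < T - t) (hD : 0 < D)
    (hv : 0 < v) :
    v * Real.exp (α * (T - t)) * Real.exp (-(d₁ α σ₁ D T t v) ^ 2 / 2)
      = D * Real.exp (-(d₂ α σ₁ D T t v) ^ 2 / 2) := by
  set s := σ₁ * Real.sqrt (T - t) with hs
  have hspos : 0 < s := mul_pos hσ₁ (Real.sqrt_pos.2 hτ)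
  have hs2 : s ^ 2 = σ₁ ^ 2 * (T - t) := by
    rw [hs, mul_pow, Real.sq_sqrt hτ.le]
  have hsd : s * d₁ α σ₁ D T t v
      = Real.log D - Real.log v - (σ₁ ^ 2 / 2 + α) * (T - t) := by
    rw [d₁, ← hs, mul_div_cancel₀ _ hspos.ne', Real.log_div hD.ne' hv.ne']
    field_simp
  have hd2 : d₂ α σ₁ D T t v = d₁ α σ₁ D T t v + s := rfl
  have expand : (d₂ α σ₁ D T t v) ^ 2
      = (d₁ α σ₁ D T t v) ^ 2 + 2 * (s * d₁ α σ₁ D T t v) + s ^ 2 := by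
    rw [hd2]; ring
  have L : v * Real.exp (α * (T - t)) * Real.exp (-(d₁ α σ₁ D T t v) ^ 2 / 2)
      = Real.exp (Real.log v + α * (T - t) + -(d₁ α σ₁ D T t v) ^ 2 / 2) := by
    rw [Real.exp_add, Real.exp_add, Real.exp_log hv]
  have R : D * Real.exp (-(d₂ α σ₁ D T t v) ^ 2 / 2)
      = Real.exp (Real.log D + -(d₂ α σ₁ D T t v) ^ 2 / 2) := by
    rw [Real.exp_add, Real.exp_log hD]
  rw [L, R]
  congr 1
  rw [expand, hsd, hs2]
  ring

theorem b_over_v_strictAnti (μ₁ μ₂ ρ σ₁ σ₂ D T t : ℝ)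
    (hσ₁ : 0 < σ₁) (hσ₂ : 0 < σ₂) (hD : 0 < D) (ht : 0 ≤ t) (htT : t < T) :
    (∀ v : ℝ, 0 < v →
      HasDerivAt (fun v => bfun (μ₁ - ρ * μ₂ * σ₁ / σ₂) σ₁ D T t v / v)
        (-(D * (1 - stdNormalCDF (d₂ (μ₁ - ρ * μ₂ * σ₁ / σ₂) σ₁ D T t v)) / v ^ 2)) v) ∧
    (∀ v : ℝ, 0 < v →
      -(D * (1 - stdNormalCDF (d₂ (μ₁ - ρ * μ₂ * σ₁ / σ₂) σ₁ D T t v)) / v ^ 2) < 0) ∧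
    StrictAntiOn (fun v => bfun (μ₁ - ρ * μ₂ * σ₁ / σ₂) σ₁ D T t v / v) (Set.Ioi 0) := by
  set α := μ₁ - ρ * μ₂ * σ₁ / σ₂ with hα
  have hτ : 0 < T - t := sub_pos.2 htT
  set s := σ₁ * Real.sqrt (T - t) with hs
  have hspos : 0 < s := mul_pos hσ₁ (Real.sqrt_pos.2 hτ)
  have hderiv : ∀ v : ℝ, 0 < v →
      HasDerivAt (fun v => bfun α σ₁ D T t v / v)
        (-(D * (1 - stdNormalCDF (d₂ α σ₁ D T t v)) / v ^ 2)) v := by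
    intro v hv
    -- derivative of d₁ in v
    have hDv : HasDerivAt (fun v : ℝ => D / v) (D * -(v ^ 2)⁻¹) v := by
      simpa [div_eq_mul_inv] using (hasDerivAt_inv hv.ne').const_mul D
    have hlog : HasDerivAt (fun v : ℝ => Real.log (D / v))
        ((D * -(v ^ 2)⁻¹) / (D / v)) v :=
      hDv.log (by positivity)
    have hd1' : HasDerivAt (fun w => d₁ α σ₁ D T t w) (-(1 / (v * s))) v := by
      have h1 : HasDerivAt (fun w : ℝ =>
          (Real.log (D / w) - σ₁ ^ 2 * (1 / 2 + α / σ₁ ^ 2) * (T - t)) / (σ₁ * Real.sqrt (T - t)))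
          (((D * -(v ^ 2)⁻¹) / (D / v)) / (σ₁ * Real.sqrt (T - t))) v := by
        simpa using ((hlog.sub_const _).div_const _)
      have : ((D * -(v ^ 2)⁻¹) / (D / v)) / (σ₁ * Real.sqrt (T - t)) = -(1 / (v * s)) := by
        rw [← hs]
        field_simp
      rw [← this]
      exact h1
    have hd2' : HasDerivAt (fun w => d₂ α σ₁ D T t w) (-(1 / (v * s))) v := by
      unfold d₂
      simpa using hd1'.add_const (σ₁ * Real.sqrt (T - t))
    -- N ∘ d
    set φ₁ : ℝ := (Real.sqrt (2 * Real.pi))⁻¹ * Real.exp (-(d₁ α σ₁ D T t v) ^ 2 / 2) with hφ₁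
    set φ₂ : ℝ := (Real.sqrt (2 * Real.pi))⁻¹ * Real.exp (-(d₂ α σ₁ D T t v) ^ 2 / 2) with hφ₂
    have hN1 : HasDerivAt (fun w => stdNormalCDF (d₁ α σ₁ D T t w))
        (φ₁ * -(1 / (v * s))) v :=
      (hasDerivAt_stdNormalCDF _).comp v hd1'
    have hN2 : HasDerivAt (fun w => stdNormalCDF (d₂ α σ₁ D T t w))
        (φ₂ * -(1 / (v * s))) v :=
      (hasDerivAt_stdNormalCDF _).comp v hd2'
    -- numerator
    have hg : HasDerivAt (fun w => bfun α σ₁ D T t w)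
        ((Real.exp (α * (T - t)) * stdNormalCDF (d₁ α σ₁ D T t v)
            + v * Real.exp (α * (T - t)) * (φ₁ * -(1 / (v * s))))
          + D * (0 - φ₂ * -(1 / (v * s)))) v := by
      unfold bfun
      exact (((hasDerivAt_id v).mul_const _ |>.mul hN1).congr_deriv
          (by simp only [id_eq]; ring)).add
        (((hasDerivAt_const v (1:ℝ)).sub hN2).const_mul D)
    have hF := hg.div (hasDerivAt_id v) hv.ne'
    have hkey : v * Real.exp (α * (T - t)) * Real.exp (-(d₁ α σ₁ D T t v) ^ 2 / 2)
        = D * Real.exp (-(d₂ α σ₁ D T t v) ^ 2 / 2) := key_identity α σ₁ D T t v hσ₁ hτ hD hv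
    have hkeyφ : v * Real.exp (α * (T - t)) * φ₁ = D * φ₂ := by
      rw [hφ₁, hφ₂]
      field_simp at hkey ⊢
      linarith [hkey]
    simp only [id_eq] at hF
    have hnum : (Real.exp (α * (T - t)) * stdNormalCDF (d₁ α σ₁ D T t v)
            + v * Real.exp (α * (T - t)) * (φ₁ * -(1 / (v * s)))
          + D * (0 - φ₂ * -(1 / (v * s)))) * v - bfun α σ₁ D T t v * 1
        = -(D * (1 - stdNormalCDF (d₂ α σ₁ D T t v))) := by
      unfold bfun
      field_simp
      linear_combination -hkeyφ
    have heq : (Real.exp (α * (T - t)) * stdNormalCDF (d₁ α σ₁ D T t v)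
            + v * Real.exp (α * (T - t)) * (φ₁ * -(1 / (v * s)))
          + D * (0 - φ₂ * -(1 / (v * s)))) * v - bfun α σ₁ D T t v * 1
        = -(D * (1 - stdNormalCDF (d₂ α σ₁ D T t v))) * v ^ 2 / v ^ 2 := by
      rw [hnum, mul_div_cancel_right₀ _ (pow_ne_zero 2 hv.ne')]
    rw [heq] at hF
    rw [mul_div_cancel_right₀ _ (pow_ne_zero 2 hv.ne'), neg_div] at hF
    exact hF
  refine ⟨hderiv, fun v hv => ?_, ?_⟩
  · have h1 : stdNormalCDF (d₂ α σ₁ D T t v) < 1 := stdNormalCDF_lt_one _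
    have : 0 < D * (1 - stdNormalCDF (d₂ α σ₁ D T t v)) / v ^ 2 := by
      apply div_pos (mul_pos hD (by linarith)) (pow_pos hv 2)
    linarith
  · apply strictAntiOn_of_deriv_neg (convex_Ioi 0)
    · intro v hv
      exact (hderiv v hv).continuousAt.continuousWithinAt
    · intro v hv
      rw [interior_Ioi] at hv
      rw [(hderiv v hv).deriv]
      have h1 : stdNormalCDF (d₂ α σ₁ D T t v) < 1 := stdNormalCDF_lt_one _
      have : 0 < D * (1 - stdNormalCDF (d₂ α σ₁ D T t v)) / v ^ 2 :=
        div_pos (mul_pos hD (by linarith)) (pow_pos hv 2)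
      linarith
end

section
/- With b as in the Merton-style bond formula, for each fixed t ∈ [0,T), lim_{v→0⁺} b(t,v)/v = e^{α(T-t)}, and consequently sup_{v>0} b(t,v)/v = e^{α(T-t)}; in particular b(t,v)/v is bounded on [0,T) × (0,∞) by e^{|α|T}. -/
open Real

open Filter

section MertonAux

open MeasureTheory Set

/-- The standard normal density. -/
noncomputable def gpdf (x : ℝ) : ℝ := (Real.sqrt (2 * Real.pi))⁻¹ * Real.exp (-x ^ 2 / 2)

lemma gpdf_eq : gpdf = fun x => (Real.sqrt (2 * Real.pi))⁻¹ * Real.exp (-(1/2:ℝ) * x ^ 2) := by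
  funext x; unfold gpdf; congr 1; ring

lemma gpdf_pos (x : ℝ) : 0 < gpdf x := by
  have : 0 < Real.sqrt (2 * Real.pi) := Real.sqrt_pos.2 (by positivity)
  exact mul_pos (inv_pos.2 this) (Real.exp_pos _)

lemma gpdf_integrable : Integrable gpdf := by
  rw [gpdf_eq]
  exact (integrable_exp_neg_mul_sq (by norm_num)).const_mul _

lemma gpdf_integral : ∫ x, gpdf x = 1 := by
  rw [gpdf_eq, MeasureTheory.integral_const_mul, integral_gaussian,
    show Real.pi / (1/2 : ℝ) = 2 * Real.pi by ring,
    inv_mul_cancel₀ (ne_of_gt (Real.sqrt_pos.2 (by positivity)))]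

lemma cdf_eq (x : ℝ) : stdNormalCDF x = ∫ z in Iic x, gpdf z := rfl

lemma one_sub_cdf (b : ℝ) : 1 - stdNormalCDF b = ∫ z in Ioi b, gpdf z := by
  have h := intervalIntegral.integral_Iic_add_Ioi (b := b) (f := gpdf)
    gpdf_integrable.integrableOn gpdf_integrable.integrableOn
  rw [gpdf_integral] at h
  rw [cdf_eq]; linarith

lemma cdf_nonneg (x : ℝ) : 0 ≤ stdNormalCDF x := by
  rw [cdf_eq]
  exact setIntegral_nonneg measurableSet_Iic fun z _ => (gpdf_pos z).le

lemma cdf_le_one (x : ℝ) : stdNormalCDF x ≤ 1 := by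
  have h := one_sub_cdf x
  have : 0 ≤ ∫ z in Ioi x, gpdf z :=
    setIntegral_nonneg measurableSet_Ioi fun z _ => (gpdf_pos z).le
  linarith

lemma gpdf_shift_integrable (c : ℝ) : Integrable (fun z : ℝ => gpdf (z + c)) := by
  have h := (measurePreserving_add_right volume c).integrable_comp_emb
    (measurableEmbedding_addRight c) (g := gpdf)
  exact h.2 gpdf_integrable

/-- Monotonicity of the Mills ratio, in product form. -/
lemma mills {a b : ℝ} (hab : a ≤ b) :
    gpdf a * (1 - stdNormalCDF b) ≤ gpdf b * (1 - stdNormalCDF a) := by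
  rw [one_sub_cdf, one_sub_cdf]
  set c := b - a with hc
  have hc0 : 0 ≤ c := by simp [hc]; linarith
  have hshift : ∫ z in Ioi b, gpdf z = ∫ z in Ioi a, gpdf (z + c) := by
    have h := (measurePreserving_add_right volume c).setIntegral_preimage_emb
      (measurableEmbedding_addRight c) gpdf (Ioi b)
    have hpre : (fun x : ℝ => x + c) ⁻¹' Ioi b = Ioi a := by
      ext x
      simp only [Set.mem_preimage, Set.mem_Ioi, hc]
      constructor <;> intro h <;> linarith
    rw [hpre] at h
    exact h.symm
  rw [hshift, ← MeasureTheory.integral_const_mul, ← MeasureTheory.integral_const_mul]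
  apply setIntegral_mono_on
  · exact ((gpdf_shift_integrable c).const_mul _).integrableOn
  · exact (gpdf_integrable.const_mul _).integrableOn
  · exact measurableSet_Ioi
  · intro z hz
    simp only [gpdf]
    rw [show (√(2 * π))⁻¹ * rexp (-a ^ 2 / 2) * ((√(2 * π))⁻¹ * rexp (-(z + c) ^ 2 / 2))
        = (√(2 * π))⁻¹ * (√(2 * π))⁻¹ * (rexp (-a ^ 2 / 2) * rexp (-(z + c) ^ 2 / 2)) by ring,
      show (√(2 * π))⁻¹ * rexp (-b ^ 2 / 2) * ((√(2 * π))⁻¹ * rexp (-z ^ 2 / 2))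
        = (√(2 * π))⁻¹ * (√(2 * π))⁻¹ * (rexp (-b ^ 2 / 2) * rexp (-z ^ 2 / 2)) by ring,
      ← Real.exp_add, ← Real.exp_add]
    have hsq : 0 < (√(2 * π))⁻¹ := inv_pos.2 (Real.sqrt_pos.2 (by positivity))
    apply mul_le_mul_of_nonneg_left _ (by positivity)
    apply Real.exp_le_exp.2
    have hza : a ≤ z := le_of_lt hz
    nlinarith [mul_nonneg hc0 (sub_nonneg.2 hza)]

lemma cdf_tendsto_one : Tendsto stdNormalCDF atTop (nhds 1) := by
  have h := (MeasureTheory.aecover_Iic (μ := volume) (l := atTop)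
    (b := fun x : ℝ => x) tendsto_id).integral_tendsto_of_countably_generated gpdf_integrable
  rw [gpdf_integral] at h
  exact h

/-- The key lemma: limit and uniform bound of `b(t,v)/v` for fixed `t < T`. -/
lemma merton_key (α σ₁ D T t : ℝ) (hσ₁ : 0 < σ₁) (hD : 0 < D) (ht : t < T) :
    Tendsto (fun v => bfun α σ₁ D T t v / v) (nhdsWithin 0 (Set.Ioi 0))
      (nhds (Real.exp (α * (T - t)))) ∧
    ∀ v, 0 < v → bfun α σ₁ D T t v / v ≤ Real.exp (α * (T - t)) := by
  have hτ : 0 < T - t := sub_pos.2 ht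
  have hst : 0 < σ₁ * Real.sqrt (T - t) := mul_pos hσ₁ (Real.sqrt_pos.2 hτ)
  have hs2 : (σ₁ * Real.sqrt (T - t)) ^ 2 = σ₁ ^ 2 * (T - t) := by
    rw [mul_pow, Real.sq_sqrt hτ.le]
  -- identity : D · φ(d₂) = v e^{ατ} φ(d₁)
  have hid : ∀ v : ℝ, 0 < v →
      D * gpdf (d₂ α σ₁ D T t v) = v * Real.exp (α * (T - t)) * gpdf (d₁ α σ₁ D T t v) := by
    intro v hv
    have hxs : d₁ α σ₁ D T t v * (σ₁ * Real.sqrt (T - t))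
        = Real.log (D / v) - (σ₁ ^ 2 / 2 + α) * (T - t) := by
      unfold d₁; field_simp
    have hdiff : (d₂ α σ₁ D T t v) ^ 2 / 2 - (d₁ α σ₁ D T t v) ^ 2 / 2
        = Real.log (D / v) - α * (T - t) := by
      unfold d₂
      have hexp : (d₁ α σ₁ D T t v + σ₁ * Real.sqrt (T - t)) ^ 2
          = d₁ α σ₁ D T t v ^ 2 + 2 * (d₁ α σ₁ D T t v * (σ₁ * Real.sqrt (T - t)))
            + (σ₁ * Real.sqrt (T - t)) ^ 2 := by ring
      rw [hexp, hxs, hs2]; ring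
    have hDv : Real.exp (Real.log (D / v)) = D / v := Real.exp_log (by positivity)
    unfold gpdf
    rw [show -d₂ α σ₁ D T t v ^ 2 / 2
        = -d₁ α σ₁ D T t v ^ 2 / 2 - (Real.log (D / v) - α * (T - t)) by linarith,
      Real.exp_sub, Real.exp_sub, hDv]
    have h1 : Real.exp (α * (T - t)) ≠ 0 := Real.exp_ne_zero _
    field_simp
  have hd12 : ∀ v : ℝ, d₁ α σ₁ D T t v ≤ d₂ α σ₁ D T t v := fun v => by
    unfold d₂; linarith [hst]
  -- tail bound
  have htail : ∀ v : ℝ, 0 < v →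
      D * (1 - stdNormalCDF (d₂ α σ₁ D T t v)) / v
        ≤ Real.exp (α * (T - t)) * (1 - stdNormalCDF (d₁ α σ₁ D T t v)) := by
    intro v hv
    rw [div_le_iff₀ hv]
    have hmul : (D * (1 - stdNormalCDF (d₂ α σ₁ D T t v))) * gpdf (d₂ α σ₁ D T t v)
        ≤ (Real.exp (α * (T - t)) * (1 - stdNormalCDF (d₁ α σ₁ D T t v)) * v)
            * gpdf (d₂ α σ₁ D T t v) := by
      have h1 := mul_le_mul_of_nonneg_left (mills (hd12 v))
        (mul_pos hv (Real.exp_pos (α * (T - t)))).le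
      calc (D * (1 - stdNormalCDF (d₂ α σ₁ D T t v))) * gpdf (d₂ α σ₁ D T t v)
          = v * Real.exp (α * (T - t))
              * (gpdf (d₁ α σ₁ D T t v) * (1 - stdNormalCDF (d₂ α σ₁ D T t v))) := by
            linear_combination (1 - stdNormalCDF (d₂ α σ₁ D T t v)) * hid v hv
        _ ≤ v * Real.exp (α * (T - t))
              * (gpdf (d₂ α σ₁ D T t v) * (1 - stdNormalCDF (d₁ α σ₁ D T t v))) := h1
        _ = (Real.exp (α * (T - t)) * (1 - stdNormalCDF (d₁ α σ₁ D T t v)) * v)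
              * gpdf (d₂ α σ₁ D T t v) := by ring
    exact le_of_mul_le_mul_right hmul (gpdf_pos _)
  -- split
  have hsplit : ∀ v : ℝ, 0 < v → bfun α σ₁ D T t v / v
      = Real.exp (α * (T - t)) * stdNormalCDF (d₁ α σ₁ D T t v)
        + D * (1 - stdNormalCDF (d₂ α σ₁ D T t v)) / v := by
    intro v hv
    unfold bfun
    field_simp
  -- upper bound
  have hub : ∀ v, 0 < v → bfun α σ₁ D T t v / v ≤ Real.exp (α * (T - t)) := by
    intro v hv
    rw [hsplit v hv]
    have h1 := htail v hv
    have h2 : Real.exp (α * (T - t)) * (1 - stdNormalCDF (d₁ α σ₁ D T t v))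
        = Real.exp (α * (T - t)) - Real.exp (α * (T - t)) * stdNormalCDF (d₁ α σ₁ D T t v) := by
      ring
    linarith
  refine ⟨?_, hub⟩
  -- limit
  have hd1top : Tendsto (fun v => d₁ α σ₁ D T t v) (nhdsWithin 0 (Set.Ioi 0)) atTop := by
    have hlog : Tendsto (fun v : ℝ => Real.log (D / v)) (nhdsWithin 0 (Set.Ioi 0)) atTop := by
      have h1 : Tendsto (fun v : ℝ => -Real.log v) (nhdsWithin 0 (Set.Ioi 0)) atTop :=
        tendsto_neg_atBot_atTop.comp Real.tendsto_log_nhdsGT_zero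
      have h2 := tendsto_atTop_add_const_left _ (Real.log D) h1
      refine h2.congr' ?_
      filter_upwards [self_mem_nhdsWithin] with v hv
      rw [Real.log_div hD.ne' (ne_of_gt hv)]
      ring
    have h3 := tendsto_atTop_add_const_right _
      (-(σ₁ ^ 2 * (1 / 2 + α / σ₁ ^ 2) * (T - t))) hlog
    have h4 := h3.atTop_div_const hst
    refine h4.congr fun v => ?_
    unfold d₁
    ring_nf
  have hN1 : Tendsto (fun v => stdNormalCDF (d₁ α σ₁ D T t v)) (nhdsWithin 0 (Set.Ioi 0))
      (nhds 1) := cdf_tendsto_one.comp hd1top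
  have htail0 : Tendsto (fun v => D * (1 - stdNormalCDF (d₂ α σ₁ D T t v)) / v)
      (nhdsWithin 0 (Set.Ioi 0)) (nhds 0) := by
    have hupper : Tendsto
        (fun v => Real.exp (α * (T - t)) * (1 - stdNormalCDF (d₁ α σ₁ D T t v)))
        (nhdsWithin 0 (Set.Ioi 0)) (nhds 0) := by
      have h := Tendsto.const_mul (Real.exp (α * (T - t)))
        ((tendsto_const_nhds (x := (1 : ℝ))
          (f := nhdsWithin (0:ℝ) (Set.Ioi 0))).sub hN1)
      simpa using h
    refine tendsto_of_tendsto_of_tendsto_of_le_of_le' tendsto_const_nhds hupper ?_ ?_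
    · filter_upwards [self_mem_nhdsWithin] with v hv
      have h1 : 0 ≤ 1 - stdNormalCDF (d₂ α σ₁ D T t v) := by
        linarith [cdf_le_one (d₂ α σ₁ D T t v)]
      exact div_nonneg (mul_nonneg hD.le h1) (Set.mem_Ioi.1 hv).le
    · filter_upwards [self_mem_nhdsWithin] with v hv
      exact htail v hv
  have hsum := (hN1.const_mul (Real.exp (α * (T - t)))).add htail0
  rw [add_zero, mul_one] at hsum
  refine hsum.congr' ?_
  filter_upwards [self_mem_nhdsWithin] with v hv
  exact (hsplit v hv).symm

end MertonAux

theorem b_over_v_limit_and_bound (μ₁ μ₂ ρ σ₁ σ₂ D T : ℝ)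
    (hσ₁ : 0 < σ₁) (hσ₂ : 0 < σ₂) (hD : 0 < D) (hT : 0 < T) :
    (∀ t : ℝ, 0 ≤ t → t < T →
      Tendsto (fun v => bfun (μ₁ - ρ * μ₂ * σ₁ / σ₂) σ₁ D T t v / v)
        (nhdsWithin 0 (Set.Ioi 0))
        (nhds (Real.exp ((μ₁ - ρ * μ₂ * σ₁ / σ₂) * (T - t))))) ∧
    (∀ t : ℝ, 0 ≤ t → t < T →
      IsLUB ((fun v => bfun (μ₁ - ρ * μ₂ * σ₁ / σ₂) σ₁ D T t v / v) '' Set.Ioi 0)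
        (Real.exp ((μ₁ - ρ * μ₂ * σ₁ / σ₂) * (T - t)))) ∧
    (∀ t v : ℝ, 0 ≤ t → t < T → 0 < v →
      bfun (μ₁ - ρ * μ₂ * σ₁ / σ₂) σ₁ D T t v / v ≤
        Real.exp (|μ₁ - ρ * μ₂ * σ₁ / σ₂| * T)) := by
  set A := μ₁ - ρ * μ₂ * σ₁ / σ₂ with hA
  refine ⟨fun t _ htT => (merton_key A σ₁ D T t hσ₁ hD htT).1, fun t _ htT => ?_,
    fun t v ht0 htT hv => ?_⟩
  · constructor
    · rintro x ⟨v, hv, rfl⟩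
      exact (merton_key A σ₁ D T t hσ₁ hD htT).2 v (Set.mem_Ioi.1 hv)
    · intro c hc
      refine le_of_tendsto (merton_key A σ₁ D T t hσ₁ hD htT).1 ?_
      filter_upwards [self_mem_nhdsWithin] with v hv
      exact hc ⟨v, hv, rfl⟩
  · have h1 := (merton_key A σ₁ D T t hσ₁ hD htT).2 v hv
    refine h1.trans (Real.exp_le_exp.2 ?_)
    have h2 : A * (T - t) ≤ |A| * (T - t) :=
      mul_le_mul_of_nonneg_right (le_abs_self A) (by linarith)
    have h3 : |A| * (T - t) ≤ |A| * T :=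
      mul_le_mul_of_nonneg_left (by linarith) (abs_nonneg A)
    linarith
end
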